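/- The output forest of the $\xi$ algorithm is invariant under cyclic rotation of the input: if $\hat{\mathcal{U}}, \hat{\mathcal{S}}$ are obtained from $\mathcal{U}, \mathcal{S}$ by the same cyclic permutation, then $\xi(\hat{\mathcal{U}}, \hat{\mathcal{S}})$ is the same forest (same edge set and parent-child relations) as $\xi(\mathcal{U}, \mathcal{S}}$, up to the ordering of trees. -/

import Mathlib

/-- Index of the previous position on a ring of `n` positions. -/
def prevIdx (n p : ℕ) : ℕ := (p + n - 1) % n

/-- A position `p` of the ring `r` of (label, counter) pairs qualifies for processing:
its counter is `0` and the counter of the previous unprocessed node is positive. -/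
def qual (r : List (ℕ × ℕ)) (p : ℕ) : Bool :=
  ((r.getD p (0, 0)).2 == 0) && ((r.getD (prevIdx r.length p) (0, 0)).2 != 0)

/-- One simultaneous step of the ξ algorithm: returns the list of (parent, child) edges
added in this step, and the new ring (qualifying nodes removed, their predecessors'
counters decremented). -/
def xiStep (r : List (ℕ × ℕ)) : List (ℕ × ℕ) × List (ℕ × ℕ) :=
  ((List.range r.length).filterMap fun p =>
      if qual r p then
        some ((r.getD (prevIdx r.length p) (0, 0)).1, (r.getD p (0, 0)).1)
      else none,
   (List.range r.length).filterMap fun p =>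
      if qual r p then none
      else some ((r.getD p (0, 0)).1,
        if qual r ((p + 1) % r.length) then (r.getD p (0, 0)).2 - 1
        else (r.getD p (0, 0)).2))

/-- Iterate the ξ algorithm with the given fuel, stopping when no pair qualifies.
Returns the accumulated (parent, child) edges and the final ring. -/
def xiAux : ℕ → List (ℕ × ℕ) → List (ℕ × ℕ) × List (ℕ × ℕ)
  | 0, r => ([], r)
  | t + 1, r =>
    let st := xiStep r
    if st.1 = [] then ([], r)
    else
      let rest := xiAux t st.2
      (st.1 ++ rest.1, rest.2)

/-- Run the ξ algorithm on a ring of (label, counter) pairs. -/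
def xiRun (r : List (ℕ × ℕ)) : List (ℕ × ℕ) × List (ℕ × ℕ) := xiAux r.length r

/-- The ξ construction applied to a sequence of offspring counts, the node labels being
the positions `0, …, n-1` in the sequence. -/
def xi (s : List ℕ) : List (ℕ × ℕ) × List (ℕ × ℕ) := xiRun (s.zipIdx.map Prod.swap)

/-- The ring of unprocessed nodes after `t` iterations of the ξ algorithm. -/
def ringIter (r : List (ℕ × ℕ)) : ℕ → List (ℕ × ℕ)
  | 0 => r
  | t + 1 => (xiStep (ringIter r t)).2

/-- The edges added during the first `t` iterations of the ξ algorithm. -/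
def edgesIter (r : List (ℕ × ℕ)) : ℕ → List (ℕ × ℕ)
  | 0 => []
  | t + 1 => edgesIter r t ++ (xiStep (ringIter r t)).1


lemma filterMap_rotate' {α β : Type*} (f : α → Option β) (l : List α) (i : ℕ) :
    ∃ k, (l.rotate i).filterMap f = (l.filterMap f).rotate k := by
  refine ⟨((l.take (i % l.length)).filterMap f).length, ?_⟩
  have h : l.filterMap f
      = (l.take (i % l.length)).filterMap f ++ (l.drop (i % l.length)).filterMap f := by
    rw [← List.filterMap_append, List.take_append_drop]
  rw [List.rotate_eq_drop_append_take_mod, List.filterMap_append, h,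
    List.rotate_append_length_eq]

lemma getD_rotate (r : List (ℕ × ℕ)) (i p : ℕ) (hp : p < r.length) :
    (r.rotate i).getD p (0, 0) = r.getD ((p + i) % r.length) (0, 0) := by
  rw [List.getD_eq_getElem?_getD, List.getD_eq_getElem?_getD, List.getElem?_rotate hp]

lemma prevIdx_rotate (n p i : ℕ) (hn : 0 < n) :
    (prevIdx n p + i) % n = prevIdx n ((p + i) % n) := by
  unfold prevIdx
  rw [Nat.mod_add_mod]
  have h : (p + i) % n + n - 1 = (p + i) % n + (n - 1) := by omega
  rw [h, Nat.mod_add_mod]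
  congr 1
  omega

lemma prevIdx_lt (n p : ℕ) (hn : 0 < n) : prevIdx n p < n := by
  unfold prevIdx
  exact Nat.mod_lt _ hn

lemma qual_rotate (r : List (ℕ × ℕ)) (i p : ℕ) (hp : p < r.length) :
    qual (r.rotate i) p = qual r ((p + i) % r.length) := by
  have hn : 0 < r.length := Nat.pos_of_ne_zero (by omega)
  unfold qual
  rw [List.length_rotate, getD_rotate r i p hp,
    getD_rotate r i (prevIdx r.length p) (prevIdx_lt _ _ hn), prevIdx_rotate _ _ _ hn]

lemma map_mod_range (n i : ℕ) :
    (List.range n).map (fun p => (p + i) % n) = (List.range n).rotate i := by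
  apply List.ext_getElem
  · simp
  intro k h1 h2
  simp only [List.getElem_map, List.getElem_range, List.getElem_rotate, List.length_range]

lemma xiStep_rotate (r : List (ℕ × ℕ)) (i : ℕ) :
    (xiStep (r.rotate i)).1.Perm (xiStep r).1 ∧
      ∃ k, (xiStep (r.rotate i)).2 = ((xiStep r).2).rotate k := by
  rcases Nat.eq_zero_or_pos r.length with h0 | hn
  · have hr : r = [] := List.eq_nil_of_length_eq_zero h0
    subst hr
    simp [xiStep]
  · have hlen : (r.rotate i).length = r.length := List.length_rotate r i
    have hq : ∀ p, p < r.length →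
        qual (r.rotate i) p = qual r ((p + i) % r.length) := fun p hp =>
      qual_rotate r i p hp
    have hd : ∀ p, p < r.length →
        (r.rotate i).getD p (0, 0) = r.getD ((p + i) % r.length) (0, 0) := fun p hp =>
      getD_rotate r i p hp
    have hprev : ∀ p, p < r.length →
        (r.rotate i).getD (prevIdx r.length p) (0, 0)
          = r.getD (prevIdx r.length ((p + i) % r.length)) (0, 0) := by
      intro p hp
      rw [getD_rotate r i (prevIdx r.length p) (prevIdx_lt _ _ hn),
        prevIdx_rotate _ _ _ hn]
    have hq1 : ∀ p, p < r.length →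
        qual (r.rotate i) ((p + 1) % r.length)
          = qual r (((p + i) % r.length + 1) % r.length) := by
      intro p hp
      rw [qual_rotate r i _ (Nat.mod_lt _ hn)]
      congr 1
      rw [Nat.mod_add_mod, Nat.mod_add_mod]
      congr 1
      omega
    have h1 : (xiStep (r.rotate i)).1
        = ((List.range r.length).map (fun p => (p + i) % r.length)).filterMap
          (fun p => if qual r p then
            some ((r.getD (prevIdx r.length p) (0, 0)).1, (r.getD p (0, 0)).1) else none) := by
      simp only [xiStep, hlen, List.filterMap_map]
      apply List.filterMap_congr
      intro p hp
      have hp' := List.mem_range.mp hp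
      simp only [Function.comp]
      rw [hq p hp', hd p hp', hprev p hp']
    have h2 : (xiStep (r.rotate i)).2
        = ((List.range r.length).map (fun p => (p + i) % r.length)).filterMap
          (fun p => if qual r p then none else
            some ((r.getD p (0, 0)).1,
              if qual r ((p + 1) % r.length) then (r.getD p (0, 0)).2 - 1
              else (r.getD p (0, 0)).2)) := by
      simp only [xiStep, hlen, List.filterMap_map]
      apply List.filterMap_congr
      intro p hp
      have hp' := List.mem_range.mp hp
      simp only [Function.comp]
      rw [hq p hp', hd p hp', hq1 p hp']
    constructor
    · rw [h1, map_mod_range r.length i]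
      exact (List.rotate_perm _ _).filterMap _
    · rw [h2, map_mod_range r.length i]
      obtain ⟨k, hk⟩ := filterMap_rotate'
        (fun p => if qual r p then none else
          some ((r.getD p (0, 0)).1,
            if qual r ((p + 1) % r.length) then (r.getD p (0, 0)).2 - 1
            else (r.getD p (0, 0)).2)) (List.range r.length) i
      exact ⟨k, by rw [hk]; rfl⟩

lemma xiAux_rotate (t : ℕ) : ∀ (r : List (ℕ × ℕ)) (i : ℕ),
    (xiAux t (r.rotate i)).1.Perm (xiAux t r).1 := by
  induction t with
  | zero => intro r i; simp [xiAux]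
  | succ t ih =>
    intro r i
    obtain ⟨hperm, k, hring⟩ := xiStep_rotate r i
    by_cases h : (xiStep r).1 = []
    · have h' : (xiStep (r.rotate i)).1 = [] := by
        have := hperm
        rw [h] at this
        exact this.eq_nil
      simp only [xiAux, h, h', if_pos rfl]
      exact List.Perm.nil.symm.trans List.Perm.nil
    · have h' : (xiStep (r.rotate i)).1 ≠ [] := by
        intro hh
        have := hperm
        rw [hh] at this
        exact h this.symm.eq_nil
      simp only [xiAux]
      rw [if_neg h', if_neg h]
      exact hperm.append (hring ▸ ih (xiStep r).2 k)

/-- The output of the ξ algorithm is invariant under cyclic rotation of the input ring: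
rotating the (label, counter) pairs produces the same forest, i.e. the same set of
(parent, child) edges, up to the ordering of the trees. -/
theorem xi_rotation_invariant (r : List (ℕ × ℕ)) (i : ℕ) :
    ∀ e : ℕ × ℕ, e ∈ (xiRun (r.rotate i)).1 ↔ e ∈ (xiRun r).1 := by
  intro e
  have h := xiAux_rotate r.length r i
  unfold xiRun
  rw [List.length_rotate]
  exact h.mem_iff
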